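/- Let n be an even positive integer and let F be a field with char(F) ≠ 2 and |F| ≥ n² + 1. Then the F-vector space Q_n of n × n skew-symmetric matrices over F has a basis consisting entirely of invertible matrices. -/

import Mathlib

open Matrix

/-- The `F`-submodule of skew-symmetric `n × n` matrices over `F` (the space `Q_n`). -/
def skewSubmodule (F : Type*) [Field F] (n : ℕ) :
    Submodule F (Matrix (Fin n) (Fin n) F) where
  carrier := {a | aᵀ = -a}
  add_mem' := by
    intro a b ha hb
    simp only [Set.mem_setOf_eq] at *
    rw [Matrix.transpose_add, ha, hb, neg_add]
  zero_mem' := by simp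
  smul_mem' := by
    intro c a ha
    simp only [Set.mem_setOf_eq] at *
    rw [Matrix.transpose_smul, ha, smul_neg]

section Aux

variable {F : Type*} [Field F] {n : ℕ}

lemma my_eval_charpoly {m : Type*} [DecidableEq m] [Fintype m]
    (M : Matrix m m F) (r : F) :
    M.charpoly.eval r = (r • (1 : Matrix m m F) - M).det := by
  have : M.charpoly.eval r = (Polynomial.evalRingHom r) (M.charmatrix.det) := rfl
  rw [this, RingHom.map_det]
  congr 1
  ext i j
  by_cases h : i = j
  · subst h
    simp [Matrix.charmatrix_apply_eq, Matrix.one_apply]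
  · simp [Matrix.charmatrix_apply_ne _ _ _ h, Matrix.one_apply, h]

lemma exists_det_add_smul_ne_zero (hn : 0 < n)
    (hcardn : (n : Cardinal) < Cardinal.mk F)
    (A J : Matrix (Fin n) (Fin n) F) (hJ : IsUnit J.det) :
    ∃ r : F, IsUnit (A + r • J).det := by
  classical
  set N := J⁻¹ * A with hN
  have hp : ((-N).charpoly) ≠ 0 := (Matrix.charpoly_monic _).ne_zero
  have hdeg : ((-N).charpoly).natDegree = n := by
    rw [Matrix.charpoly_natDegree_eq_dim, Fintype.card_fin]
  obtain ⟨r, hr⟩ := Polynomial.exists_eval_ne_zero_of_natDegree_lt_card _ hp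
    (by rw [hdeg]; exact hcardn)
  refine ⟨r, ?_⟩
  have hfac : A + r • J = J * (r • 1 + N) := by
    rw [mul_add, Matrix.mul_smul, Matrix.mul_one, hN,
      Matrix.mul_nonsing_inv_cancel_left _ _ hJ, add_comm]
  have h2 : (r • (1 : Matrix (Fin n) (Fin n) F) + N).det ≠ 0 := by
    have := my_eval_charpoly (-N) r
    rw [sub_neg_eq_add] at this
    rw [← this]
    exact hr
  rw [hfac, Matrix.det_mul]
  exact hJ.mul (isUnit_iff_ne_zero.mpr h2)

/-- The linear equivalence between skew matrices and strictly-upper-triangular data. -/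
noncomputable def skewEquiv (h2 : (2 : F) ≠ 0) :
    skewSubmodule F n ≃ₗ[F] ({p : Fin n × Fin n // p.1 < p.2} → F) where
  toFun a := fun p => (a : Matrix (Fin n) (Fin n) F) p.1.1 p.1.2
  map_add' a b := by funext p; rfl
  map_smul' c a := by funext p; rfl
  invFun f := ⟨Matrix.of fun i j =>
      if h : i < j then f ⟨(i, j), h⟩ else if h' : j < i then -f ⟨(j, i), h'⟩ else 0, by
    show _ = _
    ext i j
    rcases lt_trichotomy i j with h | h | h
    · simp [Matrix.of_apply, h, asymm h, not_lt_of_gt h]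
    · subst h
      simp
    · simp [Matrix.of_apply, h, asymm h, not_lt_of_gt h]⟩
  left_inv a := by
    have ha : (a : Matrix (Fin n) (Fin n) F)ᵀ = -(a : Matrix (Fin n) (Fin n) F) := a.2
    apply Subtype.ext
    ext i j
    show (Matrix.of _ : Matrix (Fin n) (Fin n) F) i j = _
    rcases lt_trichotomy i j with h | h | h
    · simp [Matrix.of_apply, h]
    · subst h
      have : (a : Matrix (Fin n) (Fin n) F) i i = -(a : Matrix (Fin n) (Fin n) F) i i := by
        conv_lhs => rw [← Matrix.transpose_apply (a : Matrix (Fin n) (Fin n) F) i i, ha]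
        simp
      have hz : (a : Matrix (Fin n) (Fin n) F) i i = 0 := by
        have h2' : (2 : F) * (a : Matrix (Fin n) (Fin n) F) i i = 0 := by
          rw [two_mul]
          linear_combination this
        exact (mul_eq_zero.mp h2').resolve_left h2
      simp [Matrix.of_apply, lt_irrefl, hz]
    · have : (a : Matrix (Fin n) (Fin n) F) j i = -(a : Matrix (Fin n) (Fin n) F) i j := by
        conv_lhs => rw [← Matrix.transpose_apply (a : Matrix (Fin n) (Fin n) F) i j, ha]
        simp
      simp [Matrix.of_apply, h, asymm h, not_lt_of_gt h, this]
  right_inv f := by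
    funext p
    show (Matrix.of _ : Matrix (Fin n) (Fin n) F) p.1.1 p.1.2 = f p
    simp only [Matrix.of_apply, dif_pos p.2]

/-- Counting the strictly upper triangular positions. -/
lemma card_lt_pairs (n : ℕ) :
    Fintype.card {p : Fin n × Fin n // p.1 < p.2} = n * (n - 1) / 2 := by
  have e : {p : Fin n × Fin n // p.1 < p.2} ≃ Σ j : Fin n, Fin j.val :=
    { toFun := fun p => ⟨p.1.2, ⟨p.1.1.val, p.2⟩⟩
      invFun := fun q => ⟨(⟨q.2.val, lt_trans q.2.isLt q.1.isLt⟩, q.1), q.2.isLt⟩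
      left_inv := by rintro ⟨⟨i, j⟩, h⟩; rfl
      right_inv := by rintro ⟨j, k⟩; rfl }
  rw [Fintype.card_congr e, Fintype.card_sigma]
  simp only [Fintype.card_fin]
  rw [Fin.sum_univ_eq_sum_range (fun i => i) n, Finset.sum_range_id]

end Aux

/-- For even positive `n`, the space `Q_n` of skew-symmetric matrices
(of dimension `n (n - 1) / 2`) has a basis consisting entirely of invertible matrices. -/
theorem exists_basis_of_invertible_skew
    {F : Type*} [Field F] {n : ℕ} (hn : 0 < n) (hneven : Even n)
    (hchar : ringChar F ≠ 2) (hcard : (n ^ 2 + 1 : Cardinal) ≤ Cardinal.mk F) :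
    ∃ b : Module.Basis (Fin (n * (n - 1) / 2)) F (skewSubmodule F n),
      ∀ k, IsUnit ((b k : Matrix (Fin n) (Fin n) F)) := by
  classical
  obtain ⟨m, hm⟩ := hneven
  have h2 : (2 : F) ≠ 0 := Ring.two_ne_zero hchar
  -- the standard symplectic matrix
  let e : Fin n ≃ Fin m ⊕ Fin m := (finCongr hm).trans finSumFinEquiv.symm
  let J0 : Matrix (Fin m ⊕ Fin m) (Fin m ⊕ Fin m) F := fromBlocks 0 1 (-1) 0
  let J : Matrix (Fin n) (Fin n) F := J0.submatrix e e
  have hJ0sq : J0 * J0 = -1 := by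
    show fromBlocks 0 1 (-1) 0 * fromBlocks 0 1 (-1) 0 = -1
    rw [Matrix.fromBlocks_multiply, ← Matrix.fromBlocks_one, Matrix.fromBlocks_neg]
    congr 1 <;> simp
  have hdetJ0 : IsUnit J0.det := by
    apply IsUnit.of_mul_eq_one J0.det
    rw [← Matrix.det_mul, hJ0sq, Matrix.det_neg, Matrix.det_one, mul_one]
    rw [Fintype.card_sum, Fintype.card_fin]
    exact Even.neg_one_pow ⟨m, rfl⟩
  have hdetJ : IsUnit J.det := by
    rwa [Matrix.det_submatrix_equiv_self]
  have hJ0t : J0ᵀ = -J0 := by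
    show (fromBlocks 0 1 (-1) 0)ᵀ = -fromBlocks 0 1 (-1) 0
    rw [Matrix.fromBlocks_transpose, Matrix.fromBlocks_neg]
    simp
  have hJskew : Jᵀ = -J := by
    show (J0.submatrix e e)ᵀ = -(J0.submatrix e e)
    rw [Matrix.transpose_submatrix, hJ0t]
    rfl
  have hJmem : J ∈ skewSubmodule F n := hJskew
  have hcardn : (n : Cardinal) < Cardinal.mk F := by
    refine lt_of_lt_of_le ?_ hcard
    have : (n : ℕ) < n ^ 2 + 1 := Nat.lt_succ_of_le (Nat.le_self_pow two_ne_zero n)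
    calc (n : Cardinal) < ((n ^ 2 + 1 : ℕ) : Cardinal) := by exact_mod_cast this
      _ = (n : Cardinal) ^ 2 + 1 := by push_cast; ring
  -- the invertible elements span
  set S : Set (skewSubmodule F n) :=
    {x | IsUnit ((x : Matrix (Fin n) (Fin n) F))} with hS
  have hJS : (⟨J, hJmem⟩ : skewSubmodule F n) ∈ S :=
    (Matrix.isUnit_iff_isUnit_det J).mpr hdetJ
  have hspan : Submodule.span F S = ⊤ := by
    rw [eq_top_iff]
    rintro a -
    obtain ⟨r, hr⟩ := exists_det_add_smul_ne_zero hn hcardn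
      (a : Matrix (Fin n) (Fin n) F) J hdetJ
    have hymem : (a : Matrix (Fin n) (Fin n) F) + r • J ∈ skewSubmodule F n :=
      (skewSubmodule F n).add_mem a.2 ((skewSubmodule F n).smul_mem r hJmem)
    have hyS : (⟨_, hymem⟩ : skewSubmodule F n) ∈ S :=
      (Matrix.isUnit_iff_isUnit_det _).mpr hr
    have : a = (⟨_, hymem⟩ : skewSubmodule F n) - r • ⟨J, hJmem⟩ := by
      apply Subtype.ext
      show (a : Matrix (Fin n) (Fin n) F) = _
      simp
    rw [this]
    exact Submodule.sub_mem _ (Submodule.subset_span hyS)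
      (Submodule.smul_mem _ r (Submodule.subset_span hJS))
  -- extract a basis from the spanning set of invertible elements
  obtain ⟨bs, hbsS, hspanbs, hli⟩ := exists_linearIndependent F S
  have hbtop : ⊤ ≤ Submodule.span F (Set.range ((↑) : bs → skewSubmodule F n)) := by
    rw [Subtype.range_coe, hspanbs, hspan]
  let b0 : Module.Basis bs F (skewSubmodule F n) := Module.Basis.mk hli hbtop
  -- a reference basis to compute the index cardinality
  let bStd : Module.Basis {p : Fin n × Fin n // p.1 < p.2} F (skewSubmodule F n) :=
    (Pi.basisFun F _).map (skewEquiv h2).symm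
  let eIdx : bs ≃ {p : Fin n × Fin n // p.1 < p.2} := b0.indexEquiv bStd
  let eFin : {p : Fin n × Fin n // p.1 < p.2} ≃ Fin (n * (n - 1) / 2) :=
    Fintype.equivFinOfCardEq (card_lt_pairs n)
  refine ⟨b0.reindex (eIdx.trans eFin), fun k => ?_⟩
  rw [Module.Basis.reindex_apply, Module.Basis.mk_apply]
  exact hbsS ((eIdx.trans eFin).symm k).2
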